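/- Let u = (u_1,…,u_k) be a weakly increasing array of non-negative integers and v = (v_1,…,v_k) an array of positive integers, let n ≥ Σ_{i=1}^{k} v_i + max{u_i+v_i : 1 ≤ i ≤ k} - u_1, let a = n - Σ_{i=1}^{k} v_i, and let s ≥ 0. Then, as integers, a! · Σ_{r=0}^{s} (-1)^{s-r} · C(a+r, r) · C(n+1, s-r) · Π_{i=1}^{k} (u_i+1+r)_{v_i} = a! · Σ_{r=0}^{n-a-s} (-1)^{n-a-s-r} · C(a+r, r) · C(n+1, n-a-s-r) · Π_{i=1}^{k} (a+1-u_i-v_i+r)_{v_i}, where (x)_j for integer x (possibly negative) denotes the product x(x+1)⋯(x+j-1). (Both sides equal P_{n,s}^{X} for the set X determined by u and v, and the identity is equivalent to a balanced case of Gasper's transformation.) -/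

import Mathlib

open Finset Polynomial

lemma poly_coeff_one_sub_pow (D j : ℕ) :
    ((1 - X : Polynomial ℤ) ^ D).coeff j = (-1) ^ j * (D.choose j : ℤ) := by
  have h : (1 - X : Polynomial ℤ)^D = ∑ k ∈ range (D+1), C ((-1)^k * (D.choose k:ℤ)) * X^k := by
    rw [sub_eq_add_neg, add_comm, add_pow]
    refine Finset.sum_congr rfl fun k _ => ?_
    rw [one_pow, mul_one, neg_pow, map_mul, map_pow, map_neg, map_one, C_eq_natCast]
    push_cast
    ring
  rw [h, finset_sum_coeff]
  simp only [coeff_C_mul, coeff_X_pow, mul_ite, mul_one, mul_zero]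
  rw [Finset.sum_ite_eq (range (D+1)) j]
  by_cases hj : j ≤ D
  · simp [Nat.lt_succ_iff.mpr hj]
  · simp [Nat.choose_eq_zero_of_lt (Nat.lt_of_not_le hj), Nat.lt_succ_iff, hj]

lemma ps_coeff_one_sub_pow (D j : ℕ) :
    (PowerSeries.coeff j) ((1 - PowerSeries.X) ^ D) = (-1) ^ j * (D.choose j : ℤ) := by
  have h : ((((1 - X : Polynomial ℤ) ^ D) : Polynomial ℤ) : PowerSeries ℤ)
      = (1 - PowerSeries.X) ^ D := by
    rw [Polynomial.coe_pow, Polynomial.coe_sub, Polynomial.coe_one, Polynomial.coe_X]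
  rw [← h, Polynomial.coeff_coe, poly_coeff_one_sub_pow]

lemma core (K D j : ℕ) :
    ∑ r ∈ range (j+1), (-1:ℤ)^(j-r) * ((K+D+1).choose (j-r) : ℤ) * ((K+r).choose K : ℤ)
      = (-1)^j * (D.choose j : ℤ) := by
  have h1 : (PowerSeries.mk fun r => ((K+r).choose K : ℤ)) * (1-PowerSeries.X)^(K+D+1)
      = (1-PowerSeries.X)^D := by
    rw [show K+D+1 = (K+1)+D by ring, pow_add, ← mul_assoc,
      PowerSeries.mk_add_choose_mul_one_sub_pow_eq_one, one_mul]
  have h2 := congrArg (PowerSeries.coeff j) h1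
  rw [PowerSeries.coeff_mul, ps_coeff_one_sub_pow,
    Finset.Nat.sum_antidiagonal_eq_sum_range_succ_mk] at h2
  rw [← h2]
  refine Finset.sum_congr rfl fun r _ => ?_
  rw [PowerSeries.coeff_mk, ps_coeff_one_sub_pow]
  ring

lemma keyR (a i r : ℕ) :
    (a+r).choose r * (a+i+r).choose i = (a+i).choose i * (a+i+r).choose (a+i) := by
  have h1 := Nat.choose_mul (n := a+i+r) (k := a+i) (s := i)
    (by omega)
  rw [show a+i-i = a by omega, show a+i+r-i = a+r by omega] at h1
  rw [show (a+r).choose r = (a+r).choose a from Nat.choose_symm_add.symm]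
  rw [mul_comm ((a+i).choose i), h1]
  ring

lemma keyL (a i r : ℕ) :
    (a+(i+r)).choose (i+r) * (i+r).choose i = (a+i).choose i * (a+i+r).choose (a+i) := by
  have h1 := Nat.choose_mul (n := a+i+r) (k := a+i) (s := a) (by omega)
  rw [show a+i-a = i by omega, show a+i+r-a = i+r by omega] at h1
  rw [show (a+(i+r)).choose (i+r) = (a+i+r).choose a from by
    rw [show a+(i+r) = a+i+r from by omega] at *
    rw [show a+i+r = a+(i+r) from by omega]
    exact Nat.choose_symm_add.symm]
  rw [show (a+i).choose i = (a+i).choose a from Nat.choose_symm_add.symm, ← h1]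
  ring

lemma genR (a m i j : ℕ) (him : i ≤ m) :
    ∑ r ∈ range (j+1), (-1:ℤ)^(j-r) * ((a+m+1).choose (j-r):ℤ) * ((a+r).choose r:ℤ) *
        ((a+i+r).choose i:ℤ)
      = ((a+i).choose i:ℤ) * ((-1)^j * ((m-i).choose j:ℤ)) := by
  have := core (a+i) (m-i) j
  rw [show a+i+(m-i)+1 = a+m+1 by omega] at this
  rw [← this, Finset.mul_sum]
  refine Finset.sum_congr rfl fun r _ => ?_
  have : ((a+r).choose r : ℤ) * ((a+i+r).choose i:ℤ) = ((a+i).choose i:ℤ) * ((a+i+r).choose (a+i):ℤ) := by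
    exact_mod_cast congrArg (Nat.cast : ℕ → ℤ) (keyR a i r)
  rw [mul_assoc, this]
  ring

lemma genL0 (a m i s : ℕ) (his : s < i) :
    ∑ r ∈ range (s+1), (-1:ℤ)^(s-r) * ((a+m+1).choose (s-r):ℤ) * ((a+r).choose r:ℤ) *
        (r.choose i:ℤ) = 0 := by
  refine Finset.sum_eq_zero fun r hr => ?_
  rw [Finset.mem_range] at hr
  rw [show (r.choose i : ℤ) = 0 from by rw [Nat.choose_eq_zero_of_lt (show r < i by omega)]; simp]
  simp

lemma genL (a m i s : ℕ) (him : i ≤ m) (his : i ≤ s) :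
    ∑ r ∈ range (s+1), (-1:ℤ)^(s-r) * ((a+m+1).choose (s-r):ℤ) * ((a+r).choose r:ℤ) *
        (r.choose i:ℤ)
      = ((a+i).choose i:ℤ) * ((-1)^(s-i) * ((m-i).choose (s-i):ℤ)) := by
  rw [← Finset.sum_range_add_sum_Ico _ (show i ≤ s+1 from by omega)]
  have h0 : ∑ r ∈ range i, (-1:ℤ)^(s-r) * ((a+m+1).choose (s-r):ℤ) * ((a+r).choose r:ℤ) *
      (r.choose i:ℤ) = 0 := by
    refine Finset.sum_eq_zero fun r hr => ?_
    rw [Finset.mem_range] at hr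
    rw [show (r.choose i : ℤ) = 0 from by rw [Nat.choose_eq_zero_of_lt (show r < i by omega)]; simp]
    simp
  rw [h0, zero_add, Finset.sum_Ico_eq_sum_range]
  rw [show s + 1 - i = (s-i)+1 by omega]
  have := core (a+i) (m-i) (s-i)
  rw [show a+i+(m-i)+1 = a+m+1 by omega] at this
  rw [← this, Finset.mul_sum]
  refine Finset.sum_congr rfl fun r hr => ?_
  rw [Finset.mem_range] at hr
  have hc : ((a+(i+r)).choose (i+r) : ℤ) * ((i+r).choose i:ℤ)
      = ((a+i).choose i:ℤ) * ((a+i+r).choose (a+i):ℤ) := by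
    exact_mod_cast congrArg (Nat.cast : ℕ → ℤ) (keyL a i r)
  rw [show s - (i+r) = s-i-r by omega, mul_assoc, hc]
  ring

open Polynomial in
lemma evalNatDesc (i r : ℕ) :
    (descPochhammer ℚ i).eval (r : ℚ) = (Nat.factorial i : ℚ) * (r.choose i : ℚ) := by
  rw [descPochhammer_eval_eq_descFactorial, Nat.descFactorial_eq_factorial_mul_choose]
  push_cast; ring

open Polynomial in
lemma evalNegDesc (i a r : ℕ) :
    (descPochhammer ℚ i).eval (-(r : ℚ) - a - 1)
      = (-1)^i * (Nat.factorial i : ℚ) * ((a+i+r).choose i : ℚ) := by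
  have hy : (-(r : ℚ) - a - 1) = -(((r+a+1 : ℕ) : ℚ)) := by push_cast; ring
  have h1 : ∀ (y : ℚ) (j : ℕ), (descPochhammer ℚ j).eval (-y)
      = (-1)^j * (ascPochhammer ℚ j).eval y := by
    intro y j
    have h := ascPochhammer_eval_neg_eq_descPochhammer ℚ (-y) j
    rw [neg_neg] at h
    rw [h, ← mul_assoc, ← pow_add, Even.neg_one_pow ⟨j, rfl⟩, one_mul]
  have h2 : (ascPochhammer ℚ i).eval ((r+a+1 : ℕ) : ℚ)
      = ((Nat.factorial i : ℚ)) * ((a+i+r).choose i : ℚ) := by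
    rw [← ascPochhammer_eval_cast, ascPochhammer_nat_eq_ascFactorial]
    rw [show r+a+1 = (a+r)+1 from by omega, Nat.ascFactorial_eq_factorial_mul_choose]
    rw [show a+r+i = a+i+r from by omega]
    push_cast; ring
  rw [hy, h1, h2, mul_assoc]

open Polynomial in
lemma span_desc (m : ℕ) : ∀ (P : Polynomial ℚ), P.natDegree ≤ m →
    P ∈ Submodule.span ℚ (descPochhammer ℚ '' (Set.Iic m)) := by
  induction m with
  | zero =>
    intro P hP
    rw [Polynomial.eq_C_of_natDegree_le_zero hP]
    have h1 : descPochhammer ℚ 0 ∈ descPochhammer ℚ '' (Set.Iic 0) := ⟨0, Set.mem_Iic.mpr (le_refl 0), rfl⟩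
    have := Submodule.smul_mem (Submodule.span ℚ (descPochhammer ℚ '' (Set.Iic 0)))
      (P.coeff 0) (Submodule.subset_span h1)
    rwa [descPochhammer_zero, smul_eq_C_mul, mul_one] at this
  | succ m ih =>
    intro P hP
    set c := P.coeff (m+1) with hc
    have hb : (descPochhammer ℚ (m+1)).natDegree = m+1 := descPochhammer_natDegree (R := ℚ) (m+1)
    have hbm : (descPochhammer ℚ (m+1)).Monic := monic_descPochhammer ℚ (m+1)
    have hd : (P - c • descPochhammer ℚ (m+1)).natDegree ≤ m := by
      rw [Polynomial.natDegree_le_iff_coeff_eq_zero]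
      intro j hj
      rw [Polynomial.coeff_sub, Polynomial.coeff_smul]
      rcases Nat.lt_or_ge (m+1) j with h | h
      · rw [Polynomial.coeff_eq_zero_of_natDegree_lt (lt_of_le_of_lt hP h),
          Polynomial.coeff_eq_zero_of_natDegree_lt (by rw [hb]; exact h)]
        simp
      · have hj1 : j = m+1 := by omega
        subst hj1
        rw [← hc, show (descPochhammer ℚ (m+1)).coeff (m+1) = 1 from by
          have := hbm.coeff_natDegree; rwa [hb] at this]
        simp
    have h1 := ih _ hd
    have h2 : P = (P - c • descPochhammer ℚ (m+1)) + c • descPochhammer ℚ (m+1) := by ring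
    rw [h2]
    refine Submodule.add_mem _ (Submodule.span_mono ?_ h1) (Submodule.smul_mem _ _
      (Submodule.subset_span ⟨m+1, Set.mem_Iic.mpr (le_refl _), rfl⟩))
    exact Set.image_mono (Set.Iic_subset_Iic.mpr (by omega))

lemma neg_one_pow_eq_q (p q : ℕ) (h : p % 2 = q % 2) : ((-1:ℚ))^p = (-1)^q := by
  rw [neg_one_pow_eq_pow_mod_two, h, ← neg_one_pow_eq_pow_mod_two]

open Polynomial in
lemma mainLemma (a m : ℕ) (P : Polynomial ℚ) (hP : P.natDegree ≤ m) (s : ℕ) :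
    ∑ r ∈ range (s+1), (-1:ℚ)^(s-r) * ((a+m+1).choose (s-r):ℚ) * ((a+r).choose r:ℚ)
        * P.eval (r:ℚ)
      = ∑ r ∈ range (m+1-s), (-1:ℚ)^(m-s-r) * ((a+m+1).choose (m-s-r):ℚ) * ((a+r).choose r:ℚ)
          * ((-1:ℚ)^m * P.eval (-(r:ℚ)-a-1)) := by
  have hmem := span_desc m P hP
  clear hP
  induction hmem using Submodule.span_induction with
  | zero => simp
  | add x y hx hy ihx ihy =>
    simp only [Polynomial.eval_add, mul_add, Finset.sum_add_distrib]
    rw [ihx, ihy]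
  | smul c x hx ihx =>
    simp only [Polynomial.eval_smul, smul_eq_mul]
    calc ∑ r ∈ range (s+1), (-1:ℚ)^(s-r) * ((a+m+1).choose (s-r):ℚ) * ((a+r).choose r:ℚ)
            * (c * x.eval (r:ℚ))
        = c * ∑ r ∈ range (s+1), (-1:ℚ)^(s-r) * ((a+m+1).choose (s-r):ℚ) * ((a+r).choose r:ℚ)
            * x.eval (r:ℚ) := by rw [Finset.mul_sum]; exact Finset.sum_congr rfl fun r _ => by ring
      _ = c * ∑ r ∈ range (m+1-s), (-1:ℚ)^(m-s-r) * ((a+m+1).choose (m-s-r):ℚ)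
            * ((a+r).choose r:ℚ) * ((-1:ℚ)^m * x.eval (-(r:ℚ)-a-1)) := by rw [ihx]
      _ = _ := by rw [Finset.mul_sum]; exact Finset.sum_congr rfl fun r _ => by ring
  | mem x hxmem =>
    obtain ⟨i, hi, rfl⟩ := hxmem
    rw [Set.mem_Iic] at hi
    -- LHS
    have hL : ∑ r ∈ range (s+1), (-1:ℚ)^(s-r) * ((a+m+1).choose (s-r):ℚ) * ((a+r).choose r:ℚ)
          * (descPochhammer ℚ i).eval (r:ℚ)
        = (Nat.factorial i : ℚ) * ∑ r ∈ range (s+1), (-1:ℚ)^(s-r) * ((a+m+1).choose (s-r):ℚ)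
            * ((a+r).choose r:ℚ) * (r.choose i : ℚ) := by
      rw [Finset.mul_sum]
      exact Finset.sum_congr rfl fun r _ => by rw [evalNatDesc]; ring
    have hR : ∑ r ∈ range (m+1-s), (-1:ℚ)^(m-s-r) * ((a+m+1).choose (m-s-r):ℚ)
          * ((a+r).choose r:ℚ) * ((-1:ℚ)^m * (descPochhammer ℚ i).eval (-(r:ℚ)-a-1))
        = (-1:ℚ)^(m+i) * (Nat.factorial i : ℚ) * ∑ r ∈ range (m+1-s),
            (-1:ℚ)^(m-s-r) * ((a+m+1).choose (m-s-r):ℚ) * ((a+r).choose r:ℚ)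
            * ((a+i+r).choose i : ℚ) := by
      rw [mul_assoc, Finset.mul_sum, Finset.mul_sum]
      refine Finset.sum_congr rfl fun r _ => ?_
      rw [evalNegDesc, pow_add]
      ring
    rw [hL, hR]
    -- cast gen lemmas to ℚ
    have genLQ : ∀ (hi2 : i ≤ s), ∑ r ∈ range (s+1), (-1:ℚ)^(s-r) * ((a+m+1).choose (s-r):ℚ)
        * ((a+r).choose r:ℚ) * (r.choose i : ℚ)
        = ((a+i).choose i:ℚ) * ((-1)^(s-i) * ((m-i).choose (s-i):ℚ)) := by
      intro hi2
      have h := congrArg (fun z : ℤ => (z:ℚ)) (genL a m i s hi hi2)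
      push_cast at h
      convert h using 2
    have genL0Q : ∀ (hi2 : s < i), ∑ r ∈ range (s+1), (-1:ℚ)^(s-r) * ((a+m+1).choose (s-r):ℚ)
        * ((a+r).choose r:ℚ) * (r.choose i : ℚ) = 0 := by
      intro hi2
      have h := congrArg (fun z : ℤ => (z:ℚ)) (genL0 a m i s hi2)
      push_cast at h
      convert h using 2
    have genRQ : ∀ (j : ℕ), ∑ r ∈ range (j+1), (-1:ℚ)^(j-r) * ((a+m+1).choose (j-r):ℚ)
        * ((a+r).choose r:ℚ) * ((a+i+r).choose i : ℚ)
        = ((a+i).choose i:ℚ) * ((-1)^j * ((m-i).choose j:ℚ)) := by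
      intro j
      have h := congrArg (fun z : ℤ => (z:ℚ)) (genR a m i j hi)
      push_cast at h
      convert h using 2
    rcases Nat.lt_or_ge m s with hms | hms
    · -- s > m : both sides 0
      rw [show m+1-s = 0 from by omega, Finset.range_zero, Finset.sum_empty, mul_zero]
      rw [genLQ (by omega), Nat.choose_eq_zero_of_lt (show m-i < s-i from by omega)]
      simp
    · -- s ≤ m
      rw [show m+1-s = (m-s)+1 from by omega, genRQ (m-s)]
      rcases Nat.lt_or_ge s i with hsi | hsi
      · rw [genL0Q hsi, Nat.choose_eq_zero_of_lt (show m-i < m-s from by omega)]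
        simp
      · rw [genLQ hsi,
          show (m-i).choose (m-s) = (m-i).choose (s-i) from
            Nat.choose_symm_of_eq_add (by omega),
          show ((-1:ℚ))^(m+i) * (Nat.factorial i : ℚ) * (((a+i).choose i:ℚ)
              * ((-1)^(m-s) * ((m-i).choose (s-i):ℚ)))
            = ((-1:ℚ)^(m+i) * (-1)^(m-s)) * ((Nat.factorial i : ℚ) * (((a+i).choose i:ℚ)
              * ((m-i).choose (s-i):ℚ))) from by ring,
          ← pow_add, neg_one_pow_eq_q (m+i+(m-s)) (s-i) (by omega)]
        ring

theorem stmt12 (k : ℕ) (hk : 0 < k) (u v : Fin k → ℕ) (hu : Monotone u)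
    (hv : ∀ i, 0 < v i) (n s a : ℕ)
    (hn : (∑ i, v i) + (Finset.univ.sup (fun i => u i + v i) - u ⟨0, hk⟩) ≤ n)
    (ha : a = n - ∑ i, v i) :
    (Nat.factorial a : ℤ) *
        ∑ r ∈ Finset.range (s + 1),
          (-1) ^ (s - r) * (Nat.choose (a + r) r : ℤ) * (Nat.choose (n + 1) (s - r) : ℤ) *
            ∏ i, ∏ j ∈ Finset.range (v i), ((u i : ℤ) + 1 + (r : ℤ) + (j : ℤ)) =
      (Nat.factorial a : ℤ) *
        ∑ r ∈ Finset.range (n + 1 - a - s),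
          (-1) ^ (n - a - s - r) * (Nat.choose (a + r) r : ℤ) *
            (Nat.choose (n + 1) (n - a - s - r) : ℤ) *
            ∏ i, ∏ j ∈ Finset.range (v i),
              ((a : ℤ) + 1 - (u i : ℤ) - (v i : ℤ) + (r : ℤ) + (j : ℤ)) := by
  set m : ℕ := ∑ i, v i with hm
  have hmn : m ≤ n := le_trans (Nat.le_add_right _ _) hn
  have hnam : n = a + m := by omega
  set P : Polynomial ℚ := ∏ i, ∏ j ∈ range (v i), (X + C ((u i : ℚ) + 1 + j)) with hPdef
  have hdeg : P.natDegree ≤ m := by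
    calc P.natDegree ≤ ∑ i, (∏ j ∈ range (v i), (X + C ((u i : ℚ) + 1 + j))).natDegree :=
          Polynomial.natDegree_prod_le _ _
      _ ≤ ∑ i, v i := by
          refine Finset.sum_le_sum fun i _ => ?_
          refine le_trans (Polynomial.natDegree_prod_le _ _) (le_of_eq ?_)
          simp only [Polynomial.natDegree_X_add_C, Finset.sum_const, Finset.card_range,
            smul_eq_mul, mul_one]
  have hP1 : ∀ r : ℕ, P.eval (r:ℚ) = ∏ i, ∏ j ∈ range (v i), ((u i : ℚ) + 1 + r + j) := by
    intro r
    rw [hPdef, Polynomial.eval_prod]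
    refine Finset.prod_congr rfl fun i _ => ?_
    rw [Polynomial.eval_prod]
    refine Finset.prod_congr rfl fun j _ => ?_
    simp only [Polynomial.eval_add, Polynomial.eval_X, Polynomial.eval_C]
    ring
  have hP2 : ∀ r : ℕ, (-1:ℚ)^m * P.eval (-(r:ℚ)-a-1)
      = ∏ i, ∏ j ∈ range (v i), ((a:ℚ) + 1 - (u i) - (v i) + r + j) := by
    intro r
    rw [hPdef, Polynomial.eval_prod, hm, ← Finset.prod_pow_eq_pow_sum, ← Finset.prod_mul_distrib]
    refine Finset.prod_congr rfl fun i _ => ?_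
    rw [Polynomial.eval_prod,
      show ((-1:ℚ))^(v i) = ∏ _j ∈ range (v i), (-1:ℚ) from by
        rw [Finset.prod_const, Finset.card_range],
      ← Finset.prod_mul_distrib]
    rw [← Finset.prod_range_reflect (fun j => ((a:ℚ) + 1 - (u i) - (v i) + r + j)) (v i)]
    refine Finset.prod_congr rfl fun j hj => ?_
    rw [Finset.mem_range] at hj
    simp only [Polynomial.eval_add, Polynomial.eval_X, Polynomial.eval_C]
    rw [Nat.cast_sub (by omega : j ≤ v i - 1), Nat.cast_sub (by omega : 1 ≤ v i)]
    push_cast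
    ring
  have key := mainLemma a m P hdeg s
  apply Int.cast_injective (α := ℚ)
  push_cast
  rw [hnam, show a + m + 1 - a - s = m + 1 - s from by omega,
    show a + m - a - s = m - s from by omega]
  calc (Nat.factorial a : ℚ) * ∑ r ∈ range (s+1),
          (-1)^(s-r) * ((a+r).choose r : ℚ) * ((a+m+1).choose (s-r) : ℚ)
            * ∏ i, ∏ j ∈ range (v i), ((u i : ℚ) + 1 + r + j)
      = (Nat.factorial a : ℚ) * ∑ r ∈ range (s+1),
          (-1)^(s-r) * ((a+m+1).choose (s-r) : ℚ) * ((a+r).choose r : ℚ) * P.eval (r:ℚ) := by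
        congr 1
        refine Finset.sum_congr rfl fun r _ => ?_
        rw [hP1]; ring
    _ = (Nat.factorial a : ℚ) * ∑ r ∈ range (m+1-s),
          (-1)^(m-s-r) * ((a+m+1).choose (m-s-r) : ℚ) * ((a+r).choose r : ℚ)
            * ((-1:ℚ)^m * P.eval (-(r:ℚ)-a-1)) := by rw [key]
    _ = _ := by
        congr 1
        refine Finset.sum_congr rfl fun r _ => ?_
        rw [hP2]; ring
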